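/- Let n be a nonnegative integer and α, β real numbers with α > −1, β > −1 and α + β > −1, and let z be a real number with z ≠ −1. Then ( Γ(α+n+1) / (n! · Γ(α+β+n+1)) ) · Σ_{m=0}^{n} binom(n, m) · ( Γ(α+β+n+m+1) / Γ(α+m+1) ) · ((z−1)/2)^m = ( Γ(n+α+1) / (n! · Γ(α+1)) ) · ((z+1)/2)^n · Σ_{m=0}^{n} ( (−n)_m · (−n−β)_m / ((α+1)_m · m!) ) · ((z−1)/(z+1))^m, where (a)_m = a(a+1)⋯(a+m−1) denotes the rising factorial with (a)_0 = 1. -/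

import Mathlib

open Polynomial Finset

private lemma gamma_add_nat (x : ℝ) (hx : 0 < x) (m : ℕ) :
    Real.Gamma (x + m) = Real.Gamma x * (ascPochhammer ℝ m).eval x := by
  induction m with
  | zero => simp
  | succ m ih =>
    have hxm : x + (m:ℝ) ≠ 0 := by positivity
    have h : x + ((m+1 : ℕ) : ℝ) = (x + m) + 1 := by push_cast; ring
    rw [h, Real.Gamma_add_one hxm, ih, ascPochhammer_succ_eval]
    ring

private lemma asc_succ_left_eval (m : ℕ) (x : ℝ) :
    (ascPochhammer ℝ (m+1)).eval x = x * (ascPochhammer ℝ m).eval (x+1) := by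
  rw [ascPochhammer_succ_left, eval_mul, eval_X, eval_comp, eval_add, eval_X, eval_one]

private lemma asc_split (m k : ℕ) (hmk : m ≤ k) (x : ℝ) :
    (ascPochhammer ℝ k).eval x
      = (ascPochhammer ℝ m).eval x * (ascPochhammer ℝ (k-m)).eval (x + m) := by
  have := congrArg (fun p => Polynomial.eval x p) (ascPochhammer_mul (S := ℝ) m (k-m))
  simp only [Nat.add_sub_cancel' hmk, eval_mul, eval_comp, eval_add, eval_X, eval_natCast] at this
  rw [this]

private lemma vandermonde : ∀ (k : ℕ) (b c : ℝ),
    ∑ m ∈ range (k+1), (-1:ℝ)^m * (k.choose m) * (ascPochhammer ℝ m).eval b *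
      (ascPochhammer ℝ (k-m)).eval (c + m) = (ascPochhammer ℝ k).eval (c - b) := by
  intro k
  induction k with
  | zero => intro b c; simp
  | succ k ih =>
    intro b c
    rw [Finset.sum_range_succ']
    have hsum2 : ∑ m ∈ range (k+1),
        (-1:ℝ)^(m+1) * ((k+1).choose (m+1)) * (ascPochhammer ℝ (m+1)).eval b *
          (ascPochhammer ℝ (k+1-(m+1))).eval (c + ((m+1:ℕ):ℝ))
        = (∑ m ∈ range (k+1), (-1:ℝ)^(m+1) * (k.choose (m+1)) *
            (ascPochhammer ℝ (m+1)).eval b * (ascPochhammer ℝ (k-m)).eval (c + ((m:ℝ)+1)))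
          + (-b) * ∑ m ∈ range (k+1), (-1:ℝ)^m * (k.choose m) *
            (ascPochhammer ℝ m).eval (b+1) * (ascPochhammer ℝ (k-m)).eval ((c+1) + m) := by
      rw [Finset.mul_sum, ← Finset.sum_add_distrib]
      refine Finset.sum_congr rfl fun m hm => ?_
      rw [Nat.choose_succ_succ', Nat.succ_sub_succ]
      push_cast
      rw [asc_succ_left_eval m b]
      have h1 : c + 1 + (m:ℝ) = c + ((m:ℝ)+1) := by ring
      rw [h1]
      ring
    rw [hsum2, ih (b+1) (c+1)]
    have hcb : (c+1) - (b+1) = c - b := by ring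
    rw [hcb]
    -- now handle first part
    have hS1 : (∑ m ∈ range (k+1), (-1:ℝ)^(m+1) * (k.choose (m+1)) *
            (ascPochhammer ℝ (m+1)).eval b * (ascPochhammer ℝ (k-m)).eval (c + ((m:ℝ)+1)))
          + (-1:ℝ)^0 * (((k+1).choose 0 : ℕ):ℝ) * (ascPochhammer ℝ 0).eval b *
            (ascPochhammer ℝ (k+1-0)).eval (c + ((0:ℕ):ℝ))
        = (c + k) * (ascPochhammer ℝ k).eval (c - b) := by
      rw [Finset.sum_range_succ, Nat.choose_succ_self]
      simp only [Nat.cast_zero, Nat.cast_ofNat, pow_zero, Nat.choose_zero_right, Nat.cast_one,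
        ascPochhammer_zero, eval_one, Nat.sub_zero, add_zero, mul_zero, zero_mul, mul_one,
        one_mul, Nat.cast_zero]

      have hrw : ∑ m ∈ range (k+1), (-1:ℝ)^m * (k.choose m) * (ascPochhammer ℝ m).eval b *
          (ascPochhammer ℝ (k+1-m)).eval (c + m)
          = (c + k) * (ascPochhammer ℝ k).eval (c - b) := by
        rw [← ih b c, Finset.mul_sum]
        refine Finset.sum_congr rfl fun j hj => ?_
        have hjk : j ≤ k := by simpa using Nat.lt_succ_iff.mp (Finset.mem_range.mp hj)
        have : k + 1 - j = (k - j) + 1 := by omega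
        rw [this, ascPochhammer_succ_eval]
        have hc : (c + (j:ℝ)) + ((k-j : ℕ):ℝ) = c + k := by
          rw [Nat.cast_sub hjk]; ring
        rw [hc]
        ring
      rw [← hrw, Finset.sum_range_succ']
      congr 1
      · refine Finset.sum_congr rfl fun m hm => ?_
        rw [Nat.succ_sub_succ]
        push_cast
        ring
      · simp
    rw [ascPochhammer_succ_eval]
    linear_combination hS1

private lemma asc_eval_neg_nat (n m : ℕ) :
    (ascPochhammer ℝ m).eval (-(n:ℝ)) = (-1:ℝ)^m * (m.factorial : ℝ) * (n.choose m : ℝ) := by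
  rw [ascPochhammer_eval_neg_eq_descPochhammer, descPochhammer_eval_eq_descFactorial,
    Nat.descFactorial_eq_factorial_mul_choose]
  push_cast
  ring

private lemma coeff_id (n k : ℕ) (hk : k ≤ n) (α β : ℝ) (hα : -1 < α) :
    ∑ m ∈ range (k+1),
      ((ascPochhammer ℝ m).eval (-(n:ℝ)) * (ascPochhammer ℝ m).eval (-(n:ℝ)-β)) /
        ((ascPochhammer ℝ m).eval (α+1) * (m.factorial:ℝ)) * ((n-m).choose (k-m) : ℝ)
    = (n.choose k : ℝ) * (ascPochhammer ℝ k).eval (α+β+n+1) / (ascPochhammer ℝ k).eval (α+1) := by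
  have hA : α + β + (n:ℝ) + 1 = (α+1) - (-(n:ℝ) - β) := by ring
  rw [hA, ← vandermonde k (-(n:ℝ)-β) (α+1), Finset.mul_sum, Finset.sum_div]
  refine Finset.sum_congr rfl fun m hm => ?_
  have hmk : m ≤ k := Nat.lt_succ_iff.mp (Finset.mem_range.mp hm)
  have h1 := asc_eval_neg_nat n m
  have h2 := asc_split m k hmk (α+1)
  have hch : ((n.choose m : ℕ):ℝ) * ((n-m).choose (k-m) : ℝ)
      = (n.choose k : ℝ) * (k.choose m : ℝ) := by
    rw [← Nat.cast_mul, ← Nat.cast_mul, Nat.choose_mul hmk]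
  have hPm : (ascPochhammer ℝ m).eval (α+1) ≠ 0 :=
    (ascPochhammer_pos m _ (by linarith)).ne'
  have hPk : (ascPochhammer ℝ k).eval (α+1) ≠ 0 :=
    (ascPochhammer_pos k _ (by linarith)).ne'
  have hfm : (m.factorial : ℝ) ≠ 0 := Nat.cast_ne_zero.mpr m.factorial_ne_zero
  have hPkm : (ascPochhammer ℝ (k-m)).eval (α+1+(m:ℝ)) ≠ 0 :=
    (ascPochhammer_pos (k-m) _ (by have h0 : (0:ℝ) ≤ m := Nat.cast_nonneg m; linarith)).ne'
  rw [h1, h2]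
  field_simp
  linear_combination (ascPochhammer ℝ m).eval (-(n:ℝ)-β) * hch

private lemma sum_swap_tri (n : ℕ) (F : ℕ → ℕ → ℝ) :
    ∑ m ∈ range (n+1), ∑ j ∈ range (n+1-m), F m j
      = ∑ k ∈ range (n+1), ∑ m ∈ range (k+1), F m (k-m) := by
  rw [Finset.sum_sigma', Finset.sum_sigma']
  apply Finset.sum_nbij' (fun p => (⟨p.1 + p.2, p.1⟩ : Σ _ : ℕ, ℕ))
    (fun p => (⟨p.2, p.1 - p.2⟩ : Σ _ : ℕ, ℕ))
  · rintro ⟨m, j⟩ h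
    simp only [Finset.mem_sigma, Finset.mem_range] at h ⊢
    omega
  · rintro ⟨k, m⟩ h
    simp only [Finset.mem_sigma, Finset.mem_range] at h ⊢
    omega
  · rintro ⟨m, j⟩ h
    simp only [Finset.mem_sigma, Finset.mem_range] at h
    simp only []
    congr 1
    omega
  · rintro ⟨k, m⟩ h
    simp only [Finset.mem_sigma, Finset.mem_range] at h
    simp only []
    congr 1
    omega
  · rintro ⟨m, j⟩ h
    simp only [Finset.mem_sigma, Finset.mem_range] at h
    simp only [Nat.add_sub_cancel_left]

private lemma star (n : ℕ) (α β : ℝ) (hα : -1 < α) (x : ℝ) :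
    ∑ k ∈ range (n+1), (n.choose k : ℝ) *
        ((ascPochhammer ℝ k).eval (α+β+n+1) / (ascPochhammer ℝ k).eval (α+1)) * x^k
    = ∑ m ∈ range (n+1),
        ((ascPochhammer ℝ m).eval (-(n:ℝ)) * (ascPochhammer ℝ m).eval (-(n:ℝ)-β)) /
          ((ascPochhammer ℝ m).eval (α+1) * (m.factorial:ℝ)) * x^m * (x+1)^(n-m) := by
  symm
  calc ∑ m ∈ range (n+1),
        ((ascPochhammer ℝ m).eval (-(n:ℝ)) * (ascPochhammer ℝ m).eval (-(n:ℝ)-β)) /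
          ((ascPochhammer ℝ m).eval (α+1) * (m.factorial:ℝ)) * x^m * (x+1)^(n-m)
      = ∑ m ∈ range (n+1), ∑ j ∈ range (n+1-m),
          ((ascPochhammer ℝ m).eval (-(n:ℝ)) * (ascPochhammer ℝ m).eval (-(n:ℝ)-β)) /
            ((ascPochhammer ℝ m).eval (α+1) * (m.factorial:ℝ)) *
            ((n-m).choose j : ℝ) * x^(m+j) := by
        refine Finset.sum_congr rfl fun m hm => ?_
        have hmn : m ≤ n := Nat.lt_succ_iff.mp (Finset.mem_range.mp hm)
        rw [add_pow, show n+1-m = (n-m)+1 by omega, Finset.mul_sum]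
        refine Finset.sum_congr rfl fun j hj => ?_
        rw [one_pow, pow_add]
        ring
    _ = ∑ k ∈ range (n+1), ∑ m ∈ range (k+1),
          ((ascPochhammer ℝ m).eval (-(n:ℝ)) * (ascPochhammer ℝ m).eval (-(n:ℝ)-β)) /
            ((ascPochhammer ℝ m).eval (α+1) * (m.factorial:ℝ)) *
            ((n-m).choose (k-m) : ℝ) * x^(m+(k-m)) :=
        sum_swap_tri n _
    _ = ∑ k ∈ range (n+1), (n.choose k : ℝ) *
        ((ascPochhammer ℝ k).eval (α+β+n+1) / (ascPochhammer ℝ k).eval (α+1)) * x^k := by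
        refine Finset.sum_congr rfl fun k hk => ?_
        have hkn : k ≤ n := Nat.lt_succ_iff.mp (Finset.mem_range.mp hk)
        have : ∑ m ∈ range (k+1),
            ((ascPochhammer ℝ m).eval (-(n:ℝ)) * (ascPochhammer ℝ m).eval (-(n:ℝ)-β)) /
              ((ascPochhammer ℝ m).eval (α+1) * (m.factorial:ℝ)) *
              ((n-m).choose (k-m) : ℝ) * x^(m+(k-m))
            = (∑ m ∈ range (k+1),
            ((ascPochhammer ℝ m).eval (-(n:ℝ)) * (ascPochhammer ℝ m).eval (-(n:ℝ)-β)) /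
              ((ascPochhammer ℝ m).eval (α+1) * (m.factorial:ℝ)) *
              ((n-m).choose (k-m) : ℝ)) * x^k := by
          rw [Finset.sum_mul]
          refine Finset.sum_congr rfl fun m hm => ?_
          have hmk : m ≤ k := Nat.lt_succ_iff.mp (Finset.mem_range.mp hm)
          rw [show m+(k-m) = k by omega]
        rw [this, coeff_id n k hkn α β hα]
        ring

/-- The classical definition (3.15) of the Jacobi polynomial `P^{(α,β)}_n(z)` agrees with
the hypergeometric definition (3.16). -/
theorem jacobi_two_definitions_agree (n : ℕ) (α β : ℝ)
    (hα : -1 < α) (hβ : -1 < β) (hαβ : -1 < α + β) (z : ℝ) (hz : z ≠ -1) :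
    Real.Gamma (α + n + 1) / ((n.factorial : ℝ) * Real.Gamma (α + β + n + 1)) *
        ∑ m ∈ Finset.range (n + 1), (n.choose m : ℝ) *
          (Real.Gamma (α + β + n + m + 1) / Real.Gamma (α + m + 1)) * ((z - 1) / 2) ^ m =
      Real.Gamma ((n : ℝ) + α + 1) / ((n.factorial : ℝ) * Real.Gamma (α + 1)) *
        ((z + 1) / 2) ^ n *
        ∑ m ∈ Finset.range (n + 1),
          ((ascPochhammer ℝ m).eval (-(n : ℝ)) * (ascPochhammer ℝ m).eval (-(n : ℝ) - β)) /
            ((ascPochhammer ℝ m).eval (α + 1) * (m.factorial : ℝ)) *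
            ((z - 1) / (z + 1)) ^ m := by
  have hα1 : (0:ℝ) < α + 1 := by linarith
  have hn0 : (0:ℝ) ≤ (n:ℝ) := Nat.cast_nonneg n
  have hAn : (0:ℝ) < α + β + (n:ℝ) + 1 := by linarith
  have hGα : Real.Gamma (α+1) ≠ 0 := (Real.Gamma_pos_of_pos hα1).ne'
  have hGA : Real.Gamma (α+β+(n:ℝ)+1) ≠ 0 := (Real.Gamma_pos_of_pos hAn).ne'
  have hfac : (n.factorial:ℝ) ≠ 0 := Nat.cast_ne_zero.mpr n.factorial_ne_zero
  have hPk : ∀ m:ℕ, (ascPochhammer ℝ m).eval (α+1) ≠ 0 :=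
    fun m => (ascPochhammer_pos m _ hα1).ne'
  have hz1 : z + 1 ≠ 0 := fun h => hz (by linarith)
  have hg1 : Real.Gamma (α + (n:ℝ) + 1)
      = Real.Gamma (α+1) * (ascPochhammer ℝ n).eval (α+1) := by
    rw [show α + (n:ℝ) + 1 = (α+1) + n by ring, gamma_add_nat _ hα1]
  have hg2 : Real.Gamma ((n:ℝ) + α + 1)
      = Real.Gamma (α+1) * (ascPochhammer ℝ n).eval (α+1) := by
    rw [show (n:ℝ) + α + 1 = (α+1) + n by ring, gamma_add_nat _ hα1]
  have hg3 : ∀ m:ℕ, Real.Gamma (α + β + (n:ℝ) + (m:ℝ) + 1)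
      = Real.Gamma (α+β+(n:ℝ)+1) * (ascPochhammer ℝ m).eval (α+β+(n:ℝ)+1) := fun m => by
    rw [show α+β+(n:ℝ)+(m:ℝ)+1 = (α+β+(n:ℝ)+1) + m by ring, gamma_add_nat _ hAn]
  have hg4 : ∀ m:ℕ, Real.Gamma (α + (m:ℝ) + 1)
      = Real.Gamma (α+1) * (ascPochhammer ℝ m).eval (α+1) := fun m => by
    rw [show α+(m:ℝ)+1 = (α+1) + m by ring, gamma_add_nat _ hα1]
  set x : ℝ := (z-1)/2 with hx
  have hy : (z+1)/2 = x + 1 := by rw [hx]; ring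
  have hyne : x + 1 ≠ 0 := by rw [← hy]; intro h; exact hz1 (by linarith)
  have hfrac : (z-1)/(z+1) = x/(x+1) := by rw [hx, ← hy]; field_simp
  have hL : Real.Gamma (α + n + 1) / ((n.factorial : ℝ) * Real.Gamma (α + β + n + 1)) *
        ∑ m ∈ Finset.range (n + 1), (n.choose m : ℝ) *
          (Real.Gamma (α + β + n + m + 1) / Real.Gamma (α + m + 1)) * x ^ m
      = (ascPochhammer ℝ n).eval (α+1) / (n.factorial:ℝ) *
          ∑ k ∈ range (n+1), (n.choose k : ℝ) *
            ((ascPochhammer ℝ k).eval (α+β+(n:ℝ)+1) / (ascPochhammer ℝ k).eval (α+1)) * x^k := by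
    rw [hg1, Finset.mul_sum, Finset.mul_sum]
    refine Finset.sum_congr rfl fun k hk => ?_
    rw [hg3 k, hg4 k]
    have h1 : Real.Gamma (α+1) * (Real.Gamma (α+1))⁻¹ = 1 := mul_inv_cancel₀ hGα
    have h2 : Real.Gamma (α+β+(n:ℝ)+1) * (Real.Gamma (α+β+(n:ℝ)+1))⁻¹ = 1 :=
      mul_inv_cancel₀ hGA
    linear_combination ((n.choose k : ℝ) * x^k * (ascPochhammer ℝ n).eval (α+1) *
        (ascPochhammer ℝ k).eval (α+β+(n:ℝ)+1) /
        ((n.factorial:ℝ) * (ascPochhammer ℝ k).eval (α+1)) *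
        (Real.Gamma (α+β+(n:ℝ)+1) * (Real.Gamma (α+β+(n:ℝ)+1))⁻¹)) * h1 +
      ((n.choose k : ℝ) * x^k * (ascPochhammer ℝ n).eval (α+1) *
        (ascPochhammer ℝ k).eval (α+β+(n:ℝ)+1) /
        ((n.factorial:ℝ) * (ascPochhammer ℝ k).eval (α+1))) * h2
  have hR : Real.Gamma ((n : ℝ) + α + 1) / ((n.factorial : ℝ) * Real.Gamma (α + 1)) *
        ((z + 1) / 2) ^ n *
        ∑ m ∈ Finset.range (n + 1),
          ((ascPochhammer ℝ m).eval (-(n : ℝ)) * (ascPochhammer ℝ m).eval (-(n : ℝ) - β)) /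
            ((ascPochhammer ℝ m).eval (α + 1) * (m.factorial : ℝ)) *
            ((z - 1) / (z + 1)) ^ m
      = (ascPochhammer ℝ n).eval (α+1) / (n.factorial:ℝ) *
          ∑ m ∈ range (n+1),
            ((ascPochhammer ℝ m).eval (-(n:ℝ)) * (ascPochhammer ℝ m).eval (-(n:ℝ)-β)) /
              ((ascPochhammer ℝ m).eval (α+1) * (m.factorial:ℝ)) * x^m * (x+1)^(n-m) := by
    rw [hg2, hy, Finset.mul_sum, Finset.mul_sum]
    refine Finset.sum_congr rfl fun m hm => ?_
    have hmn : m ≤ n := Nat.lt_succ_iff.mp (Finset.mem_range.mp hm)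
    rw [hfrac, div_pow, show (x+1)^n = (x+1)^(n-m) * (x+1)^m by
      rw [← pow_add]; congr 1; omega]
    have hpow : (x+1)^m ≠ 0 := pow_ne_zero m hyne
    rw [mul_comm ((n.factorial:ℝ)) (Real.Gamma (α+1)), mul_div_mul_left _ _ hGα]
    have h3 : x^m / (x+1)^m * (x+1)^m = x^m := div_mul_cancel₀ _ hpow
    linear_combination ((ascPochhammer ℝ n).eval (α+1) / (n.factorial:ℝ) * (x+1)^(n-m) *
      (((ascPochhammer ℝ m).eval (-(n:ℝ)) * (ascPochhammer ℝ m).eval (-(n:ℝ)-β)) /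
        ((ascPochhammer ℝ m).eval (α+1) * (m.factorial:ℝ)))) * h3
  rw [hL, hR, star n α β hα x]
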